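/- Let P be a probability measure on 𝒮 := 𝒲 × ℝ × {0,1} × [0,1] (the law of (W, A, Δ, Y)), with measurable nuisance functions G₀, g₀, Q₀, Q₀ᵥ on 𝒮 (versions of the conditional expectations from the base setup, regarded via Doob–Dynkin factorization as functions of (a, w) resp. w), satisfying G₀ ≥ δ, g₀ ≥ δ, and let Ψ₀ := ∫ Q₀ᵥ dP and D₀ denote the efficient influence function, so that ∫ D₀ dP = 0. Let Ḡ, ḡ, Q̄, Q̄ᵥ be measurable estimated nuisances as in the base setup, let o₁, …, oₙ ∈ 𝒮 be sample points such that the two srTMLE score equations hold: (1/n)Σᵢ (1{aᵢ ≥ v}δᵢ/(ḡ(wᵢ)Ḡ(aᵢ, wᵢ)))·(yᵢ − Q̄(aᵢ, wᵢ)) = 0 and (1/n)Σᵢ (1{aᵢ ≥ v}/ḡ(wᵢ))·(Q̄(aᵢ, wᵢ) − Q̄ᵥ(wᵢ)) = 0, and set ψ* := (1/n)Σᵢ Q̄ᵥ(wᵢ) and D̄(w, a, δ', y) := (1{a ≥ v}δ'/(ḡ(w)Ḡ(a, w)))·(y − Q̄(a, w)) + (1{a ≥ v}/ḡ(w))·(Q̄(a,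 w) − Q̄ᵥ(w)) + Q̄ᵥ(w) − ψ*. Then the exact expansion holds: ψ* − Ψ₀ = (1/n)Σᵢ D₀(oᵢ) + [ (1/n)Σᵢ (D̄ − D₀)(oᵢ) − ∫ (D̄ − D₀) dP ] + R₂, where R₂ := ∫ (1{a ≥ v}/ḡ)·((G₀ − Ḡ)/Ḡ)·(Q₀ − Q̄) dP + ∫ ((g₀ − ḡ)/ḡ)·(Q₀ᵥ − Q̄ᵥ) dP. -/

import Mathlib

open MeasureTheory ProbabilityTheory
lemma absmul_le' {a b A B : ℝ} (ha : |a| ≤ A) (hb : |b| ≤ B) : |a * b| ≤ A * B := by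
  rw [abs_mul]
  exact mul_le_mul ha hb (abs_nonneg b) (le_trans (abs_nonneg a) ha)

lemma absdiv_le' {x den num d : ℝ} (hx : |x| ≤ num) (hd : 0 < d) (hden : d ≤ den) :
    |x / den| ≤ num / d := by
  rw [abs_div, abs_of_pos (lt_of_lt_of_le hd hden)]
  exact div_le_div₀ (le_trans (abs_nonneg x) hx) hx hd hden

lemma abssub_le' {a b A B : ℝ} (ha : |a| ≤ A) (hb : |b| ≤ B) : |a - b| ≤ A + B :=
  le_trans (abs_sub a b) (add_le_add ha hb)

lemma integrable_of_bdd' {α : Type*} [mα : MeasurableSpace α] (μ : Measure α)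
    [IsFiniteMeasure μ] {f : α → ℝ}
    (hf : Measurable[mα] f) {C : ℝ} (hb : ∀ᵐ s ∂μ, |f s| ≤ C) :
    Integrable f μ :=
  Integrable.mono' (integrable_const C) hf.aestronglyMeasurable
    (by simpa [Real.norm_eq_abs] using hb)

lemma integral_mul_condexp' {α : Type*} [mα : MeasurableSpace α] (μ : Measure α)
    [IsProbabilityMeasure μ]
    {m : MeasurableSpace α} (hm : m ≤ mα) {f g : α → ℝ}
    (hf : Measurable[m] f) (hg : Measurable[mα] g)
    {Cf Cg : ℝ} (hfb : ∀ᵐ s ∂μ, |f s| ≤ Cf) (hgb : ∀ᵐ s ∂μ, |g s| ≤ Cg) :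
    ∫ s, f s * g s ∂μ = ∫ s, f s * (μ[g|m]) s ∂μ := by
  have hfm : Measurable[mα] f := hf.mono hm le_rfl
  have hig : Integrable g μ := integrable_of_bdd' (mα := mα) μ hg hgb
  have hifg : Integrable (f * g) μ := by
    refine integrable_of_bdd' (mα := mα) μ (Measurable.mul (m := mα) hfm hg) (C := Cf * Cg) ?_
    filter_upwards [hfb, hgb] with s h1 h2
    exact absmul_le' h1 h2
  haveI : IsFiniteMeasure (μ.trim hm) := isFiniteMeasure_trim hm
  have h1 : ∫ s, (μ[f * g|m]) s ∂μ = ∫ s, (f * g) s ∂μ := integral_condExp hm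
  have h2 := condExp_mul_of_stronglyMeasurable_left hf.stronglyMeasurable hifg hig
  calc ∫ s, f s * g s ∂μ = ∫ s, (f * g) s ∂μ := rfl
    _ = ∫ s, (μ[f * g|m]) s ∂μ := h1.symm
    _ = ∫ s, f s * (μ[g|m]) s ∂μ := integral_congr_ae (h2.mono fun s hs => by
          simpa using hs)

/-- exact linearization of the srTMLE: empirical mean of the EIF, plus an
empirical-process term, plus the double-robust second-order remainder `R₂`, given that
the two srTMLE score equations hold at the sample points. -/
theorem stmt13 {𝒲 : Type*} [MeasurableSpace 𝒲]
    (P : Measure (𝒲 × ℝ × ℝ × ℝ)) [IsProbabilityMeasure P]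
    (v δ : ℝ) (hδ0 : 0 < δ) (hδ1 : δ < 1)
    (hΔ01 : ∀ᵐ s ∂P, s.2.2.1 = 0 ∨ s.2.2.1 = 1)
    (hY01 : ∀ᵐ s ∂P, s.2.2.2 ∈ Set.Icc (0 : ℝ) 1)
    (m0 m1 : MeasurableSpace (𝒲 × ℝ × ℝ × ℝ))
    (hm0 : m0 = MeasurableSpace.comap (fun s : 𝒲 × ℝ × ℝ × ℝ => s.1) inferInstance)
    (hm1 : m1 = MeasurableSpace.comap (fun s : 𝒲 × ℝ × ℝ × ℝ => (s.2.1, s.1)) inferInstance)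
    (G₀ g₀ Q₀ Q₀ᵥ : 𝒲 × ℝ × ℝ × ℝ → ℝ)
    (hG₀meas : Measurable[m1] G₀) (hg₀meas : Measurable[m0] g₀)
    (hQ₀meas : Measurable[m1] Q₀) (hQ₀ᵥmeas : Measurable[m0] Q₀ᵥ)
    (hG₀b : ∀ s, G₀ s ∈ Set.Icc δ 1) (hg₀b : ∀ s, g₀ s ∈ Set.Icc δ 1)
    (hQ₀b : ∀ s, |Q₀ s| ≤ 1 / δ) (hQ₀ᵥb : ∀ s, |Q₀ᵥ s| ≤ 1 / δ)
    (hG₀ : G₀ =ᵐ[P] P[fun s => s.2.2.1 | m1])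
    (hg₀ : g₀ =ᵐ[P] P[fun s => if v ≤ s.2.1 then (1 : ℝ) else 0 | m0])
    (hQ₀ : Q₀ =ᵐ[P] fun s => ((P[fun s' => s'.2.2.2 * s'.2.2.1 | m1]) s) / G₀ s)
    (hQ₀ᵥ : Q₀ᵥ =ᵐ[P] fun s =>
      ((P[fun s' => Q₀ s' * (if v ≤ s'.2.1 then (1 : ℝ) else 0) | m0]) s) / g₀ s)
    (Ψ₀ : ℝ) (hΨ₀ : Ψ₀ = ∫ s, Q₀ᵥ s ∂P)
    (Gbar gbar Qbar Qbarv : 𝒲 × ℝ × ℝ × ℝ → ℝ)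
    (hGbarMeas : Measurable[m1] Gbar) (hgbarMeas : Measurable[m0] gbar)
    (hQbarMeas : Measurable[m1] Qbar) (hQbarvMeas : Measurable[m0] Qbarv)
    (hGbarB : ∀ s, Gbar s ∈ Set.Icc δ 1) (hgbarB : ∀ s, gbar s ∈ Set.Icc δ 1)
    (hQbarB : ∀ s, Qbar s ∈ Set.Icc (0 : ℝ) 1) (hQbarvB : ∀ s, Qbarv s ∈ Set.Icc (0 : ℝ) 1)
    (n : ℕ) (hn : 0 < n) (o : Fin n → 𝒲 × ℝ × ℝ × ℝ)
    (hscore1 : (1 / n : ℝ) * ∑ i, ((if v ≤ (o i).2.1 then (1 : ℝ) else 0) * (o i).2.2.1 /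
        (gbar (o i) * Gbar (o i))) * ((o i).2.2.2 - Qbar (o i)) = 0)
    (hscore2 : (1 / n : ℝ) * ∑ i, ((if v ≤ (o i).2.1 then (1 : ℝ) else 0) / gbar (o i)) *
        (Qbar (o i) - Qbarv (o i)) = 0)
    (ψstar : ℝ) (hψstar : ψstar = (1 / n : ℝ) * ∑ i, Qbarv (o i))
    (D₀ Dbar : 𝒲 × ℝ × ℝ × ℝ → ℝ)
    (hD₀ : D₀ = fun s =>
      ((if v ≤ s.2.1 then (1 : ℝ) else 0) / g₀ s) * (s.2.2.1 / G₀ s) * (s.2.2.2 - Q₀ s)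
      + ((if v ≤ s.2.1 then (1 : ℝ) else 0) / g₀ s) * (Q₀ s - Q₀ᵥ s) + (Q₀ᵥ s - Ψ₀))
    (hD₀mean : ∫ s, D₀ s ∂P = 0)
    (hDbar : Dbar = fun s =>
      ((if v ≤ s.2.1 then (1 : ℝ) else 0) * s.2.2.1 / (gbar s * Gbar s)) * (s.2.2.2 - Qbar s)
      + ((if v ≤ s.2.1 then (1 : ℝ) else 0) / gbar s) * (Qbar s - Qbarv s) + (Qbarv s - ψstar))
    (R₂ : ℝ)
    (hR₂ : R₂ = ∫ s, ((if v ≤ s.2.1 then (1 : ℝ) else 0) / gbar s) *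
        ((G₀ s - Gbar s) / Gbar s) * (Q₀ s - Qbar s) ∂P
      + ∫ s, ((g₀ s - gbar s) / gbar s) * (Q₀ᵥ s - Qbarv s) ∂P) :
    ψstar - Ψ₀ = (1 / n : ℝ) * ∑ i, D₀ (o i)
      + ((1 / n : ℝ) * ∑ i, (Dbar (o i) - D₀ (o i)) - ∫ s, (Dbar s - D₀ s) ∂P)
      + R₂ := by
  letI mP : MeasurableSpace (𝒲 × ℝ × ℝ × ℝ) := Prod.instMeasurableSpace
  have hn' : (n : ℝ) ≠ 0 := Nat.cast_ne_zero.mpr hn.ne'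
  have hmle0 : m0 ≤ mP := by
    rw [hm0]; exact measurable_fst.comap_le
  have hπ : Measurable (fun s : 𝒲 × ℝ × ℝ × ℝ => (s.2.1, s.1)) :=
    (measurable_fst.comp measurable_snd).prodMk measurable_fst
  have hmle1 : m1 ≤ mP := by
    rw [hm1]; exact hπ.comap_le
  have hm01 : m0 ≤ m1 := by
    rw [hm0, hm1]
    have h : (fun s : 𝒲 × ℝ × ℝ × ℝ => s.1)
        = Prod.snd ∘ (fun s : 𝒲 × ℝ × ℝ × ℝ => (s.2.1, s.1)) := rfl
    rw [h, ← MeasurableSpace.comap_comp]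
    exact MeasurableSpace.comap_mono measurable_snd.comap_le
  -- pointwise bounds and nonvanishing
  have hgδ : ∀ s, δ ≤ gbar s := fun s => (hgbarB s).1
  have hGδ : ∀ s, δ ≤ Gbar s := fun s => (hGbarB s).1
  have hg₀δ : ∀ s, δ ≤ g₀ s := fun s => (hg₀b s).1
  have hG₀δ : ∀ s, δ ≤ G₀ s := fun s => (hG₀b s).1
  have hgne : ∀ s, gbar s ≠ 0 := fun s => (lt_of_lt_of_le hδ0 (hgδ s)).ne'
  have hGne : ∀ s, Gbar s ≠ 0 := fun s => (lt_of_lt_of_le hδ0 (hGδ s)).ne'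
  have hg₀ne : ∀ s, g₀ s ≠ 0 := fun s => (lt_of_lt_of_le hδ0 (hg₀δ s)).ne'
  have hG₀ne : ∀ s, G₀ s ≠ 0 := fun s => (lt_of_lt_of_le hδ0 (hG₀δ s)).ne'
  have hδδ : (0 : ℝ) < δ * δ := mul_pos hδ0 hδ0
  have hδδle : ∀ s, δ * δ ≤ gbar s * Gbar s := fun s =>
    mul_le_mul (hgδ s) (hGδ s) hδ0.le (le_trans hδ0.le (hgδ s))
  have hIb : ∀ s : 𝒲 × ℝ × ℝ × ℝ, |(if v ≤ s.2.1 then (1 : ℝ) else 0)| ≤ 1 := fun s => by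
    split <;> simp
  have h1b : |(1 : ℝ)| ≤ 1 := by norm_num
  have hQbb : ∀ s, |Qbar s| ≤ 1 := fun s =>
    abs_le.mpr ⟨by linarith [(hQbarB s).1], (hQbarB s).2⟩
  have hQvb : ∀ s, |Qbarv s| ≤ 1 := fun s =>
    abs_le.mpr ⟨by linarith [(hQbarvB s).1], (hQbarvB s).2⟩
  have hGbb : ∀ s, |Gbar s| ≤ 1 := fun s =>
    abs_le.mpr ⟨by linarith [hδ0, hGδ s], (hGbarB s).2⟩
  have hgbb : ∀ s, |gbar s| ≤ 1 := fun s =>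
    abs_le.mpr ⟨by linarith [hδ0, hgδ s], (hgbarB s).2⟩
  have hG₀bb : ∀ s, |G₀ s| ≤ 1 := fun s =>
    abs_le.mpr ⟨by linarith [hδ0, hG₀δ s], (hG₀b s).2⟩
  have hg₀bb : ∀ s, |g₀ s| ≤ 1 := fun s =>
    abs_le.mpr ⟨by linarith [hδ0, hg₀δ s], (hg₀b s).2⟩
  -- measurability (ambient)
  have hΔm : Measurable fun s : 𝒲 × ℝ × ℝ × ℝ => s.2.2.1 := measurable_snd.snd.fst
  have hym : Measurable fun s : 𝒲 × ℝ × ℝ × ℝ => s.2.2.2 := measurable_snd.snd.snd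
  have hIm1 : Measurable[m1] (fun s : 𝒲 × ℝ × ℝ × ℝ => if v ≤ s.2.1 then (1 : ℝ) else 0) := by
    rw [hm1]
    have hπ' : Measurable[MeasurableSpace.comap
        (fun s : 𝒲 × ℝ × ℝ × ℝ => (s.2.1, s.1)) inferInstance]
        (fun s : 𝒲 × ℝ × ℝ × ℝ => (s.2.1, s.1)) := Measurable.of_comap_le le_rfl
    exact Measurable.comp
      (Measurable.ite (measurableSet_le measurable_const measurable_fst)
        measurable_const measurable_const) hπ'
  have hIm : Measurable fun s : 𝒲 × ℝ × ℝ × ℝ => if v ≤ s.2.1 then (1 : ℝ) else 0 :=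
    hIm1.mono hmle1 le_rfl
  have hGm : Measurable Gbar := hGbarMeas.mono hmle1 le_rfl
  have hgm : Measurable gbar := hgbarMeas.mono hmle0 le_rfl
  have hQm : Measurable Qbar := hQbarMeas.mono hmle1 le_rfl
  have hQvm : Measurable Qbarv := hQbarvMeas.mono hmle0 le_rfl
  have hG₀m : Measurable G₀ := hG₀meas.mono hmle1 le_rfl
  have hg₀m : Measurable g₀ := hg₀meas.mono hmle0 le_rfl
  have hQ₀m : Measurable Q₀ := hQ₀meas.mono hmle1 le_rfl
  have hQ₀vm : Measurable Q₀ᵥ := hQ₀ᵥmeas.mono hmle0 le_rfl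
  have hgbar1 : Measurable[m1] gbar := hgbarMeas.mono hm01 le_rfl
  -- a.e. bounds
  have hΔb : ∀ᵐ s ∂P, |s.2.2.1| ≤ 1 := by
    filter_upwards [hΔ01] with s hs
    rcases hs with h | h <;> simp [h]
  have hyb : ∀ᵐ s ∂P, |s.2.2.2| ≤ 1 := by
    filter_upwards [hY01] with s hs
    exact abs_le.mpr ⟨by linarith [hs.1], hs.2⟩
  have hyΔb : ∀ᵐ s ∂P, |s.2.2.2 * s.2.2.1| ≤ 1 := by
    filter_upwards [hyb, hΔb] with s h1 h2
    simpa using absmul_le' h1 h2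
  -- conditional expectation identities (a.e.)
  have hEyΔ : (P[fun s' : 𝒲 × ℝ × ℝ × ℝ => s'.2.2.2 * s'.2.2.1 | m1])
      =ᵐ[P] fun s => Q₀ s * G₀ s := by
    filter_upwards [hQ₀] with s hs
    rw [hs, div_mul_cancel₀ _ (hG₀ne s)]
  have hEQI : (P[fun s' : 𝒲 × ℝ × ℝ × ℝ =>
      Q₀ s' * (if v ≤ s'.2.1 then (1 : ℝ) else 0) | m0]) =ᵐ[P] fun s => Q₀ᵥ s * g₀ s := by
    filter_upwards [hQ₀ᵥ] with s hs
    rw [hs, div_mul_cancel₀ _ (hg₀ne s)]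
  -- integrable atoms
  have IB : ∀ {f : 𝒲 × ℝ × ℝ × ℝ → ℝ} {C : ℝ}, Measurable f →
      (∀ᵐ s ∂P, |f s| ≤ C) → Integrable f P := fun hf hb => integrable_of_bdd' P hf hb
  have iA : Integrable (fun s => ((if v ≤ s.2.1 then (1 : ℝ) else 0) / (gbar s * Gbar s)) *
      (s.2.2.2 * s.2.2.1)) P := by
    refine IB (C := 1 / (δ * δ) * 1) ((hIm.div (hgm.mul hGm)).mul (hym.mul hΔm)) ?_
    filter_upwards [hyΔb] with s h
    exact absmul_le' (absdiv_le' (hIb s) hδδ (hδδle s)) h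
  have iA' : Integrable (fun s => ((if v ≤ s.2.1 then (1 : ℝ) else 0) / (gbar s * Gbar s)) *
      (Q₀ s * G₀ s)) P := by
    refine IB (C := 1 / (δ * δ) * (1 / δ * 1)) ((hIm.div (hgm.mul hGm)).mul (hQ₀m.mul hG₀m)) (ae_of_all _ fun s => ?_)
    exact absmul_le' (absdiv_le' (hIb s) hδδ (hδδle s)) (absmul_le' (hQ₀b s) (hG₀bb s))
  have iB : Integrable (fun s => ((if v ≤ s.2.1 then (1 : ℝ) else 0) * Qbar s /
      (gbar s * Gbar s)) * s.2.2.1) P := by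
    refine IB (C := 1 * 1 / (δ * δ) * 1) (((hIm.mul hQm).div (hgm.mul hGm)).mul hΔm) ?_
    filter_upwards [hΔb] with s h
    exact absmul_le' (absdiv_le' (absmul_le' (hIb s) (hQbb s)) hδδ (hδδle s)) h
  have iB' : Integrable (fun s => ((if v ≤ s.2.1 then (1 : ℝ) else 0) * Qbar s /
      (gbar s * Gbar s)) * G₀ s) P := by
    refine IB (C := 1 * 1 / (δ * δ) * 1) (((hIm.mul hQm).div (hgm.mul hGm)).mul hG₀m) (ae_of_all _ fun s => ?_)
    exact absmul_le' (absdiv_le' (absmul_le' (hIb s) (hQbb s)) hδδ (hδδle s)) (hG₀bb s)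
  have iT2 : Integrable (fun s => ((if v ≤ s.2.1 then (1 : ℝ) else 0) / gbar s) *
      (Qbar s - Qbarv s)) P := by
    refine IB (C := 1 / δ * (1 + 1)) ((hIm.div hgm).mul (hQm.sub hQvm)) (ae_of_all _ fun s => ?_)
    exact absmul_le' (absdiv_le' (hIb s) hδ0 (hgδ s)) (abssub_le' (hQbb s) (hQvb s))
  have iRa : Integrable (fun s => ((if v ≤ s.2.1 then (1 : ℝ) else 0) / gbar s) *
      ((G₀ s - Gbar s) / Gbar s) * (Q₀ s - Qbar s)) P := by
    refine IB (C := 1 / δ * ((1 + 1) / δ) * (1 / δ + 1)) (((hIm.div hgm).mul ((hG₀m.sub hGm).div hGm)).mul (hQ₀m.sub hQm))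
      (ae_of_all _ fun s => ?_)
    exact absmul_le' (absmul_le' (absdiv_le' (hIb s) hδ0 (hgδ s))
      (absdiv_le' (abssub_le' (hG₀bb s) (hGbb s)) hδ0 (hGδ s)))
      (abssub_le' (hQ₀b s) (hQbb s))
  have iC : Integrable (fun s => (1 / gbar s) *
      (Q₀ s * (if v ≤ s.2.1 then (1 : ℝ) else 0))) P := by
    refine IB (C := 1 / δ * (1 / δ * 1)) ((measurable_const.div hgm).mul (hQ₀m.mul hIm)) (ae_of_all _ fun s => ?_)
    exact absmul_le' (absdiv_le' h1b hδ0 (hgδ s)) (absmul_le' (hQ₀b s) (hIb s))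
  have iC' : Integrable (fun s => (1 / gbar s) * (Q₀ᵥ s * g₀ s)) P := by
    refine IB (C := 1 / δ * (1 / δ * 1)) ((measurable_const.div hgm).mul (hQ₀vm.mul hg₀m)) (ae_of_all _ fun s => ?_)
    exact absmul_le' (absdiv_le' h1b hδ0 (hgδ s)) (absmul_le' (hQ₀ᵥb s) (hg₀bb s))
  have iDv : Integrable (fun s => (Qbarv s / gbar s) *
      (if v ≤ s.2.1 then (1 : ℝ) else 0)) P := by
    refine IB (C := 1 / δ * 1) ((hQvm.div hgm).mul hIm) (ae_of_all _ fun s => ?_)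
    exact absmul_le' (absdiv_le' (hQvb s) hδ0 (hgδ s)) (hIb s)
  have iDv' : Integrable (fun s => (Qbarv s / gbar s) * g₀ s) P := by
    refine IB (C := 1 / δ * 1) ((hQvm.div hgm).mul hg₀m) (ae_of_all _ fun s => ?_)
    exact absmul_le' (absdiv_le' (hQvb s) hδ0 (hgδ s)) (hg₀bb s)
  have iRb : Integrable (fun s => ((g₀ s - gbar s) / gbar s) * (Q₀ᵥ s - Qbarv s)) P := by
    refine IB (C := (1 + 1) / δ * (1 / δ + 1)) (((hg₀m.sub hgm).div hgm).mul (hQ₀vm.sub hQvm)) (ae_of_all _ fun s => ?_)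
    exact absmul_le' (absdiv_le' (abssub_le' (hg₀bb s) (hgbb s)) hδ0 (hgδ s))
      (abssub_le' (hQ₀ᵥb s) (hQvb s))
  have iQv : Integrable Qbarv P := IB hQvm (ae_of_all _ hQvb)
  have iQ₀v : Integrable Q₀ᵥ P := IB hQ₀vm (ae_of_all _ hQ₀ᵥb)
  have iD₀ : Integrable D₀ P := by
    rw [hD₀]
    refine IB (C := 1 / δ * (1 / δ) * (1 + 1 / δ) + 1 / δ * (1 / δ + 1 / δ) + (1 / δ + |Ψ₀|)) ((((hIm.div hg₀m).mul (hΔm.div hG₀m)).mul (hym.sub hQ₀m)).add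
      ((hIm.div hg₀m).mul (hQ₀m.sub hQ₀vm)) |>.add (hQ₀vm.sub measurable_const)) ?_
    filter_upwards [hΔb, hyb] with s h1 h2
    refine le_trans (abs_add_le _ _) (add_le_add (le_trans (abs_add_le _ _) (add_le_add ?_ ?_)) ?_)
    · exact absmul_le' (absmul_le' (absdiv_le' (hIb s) hδ0 (hg₀δ s))
        (absdiv_le' h1 hδ0 (hG₀δ s))) (abssub_le' h2 (hQ₀b s))
    · exact absmul_le' (absdiv_le' (hIb s) hδ0 (hg₀δ s)) (abssub_le' (hQ₀b s) (hQ₀ᵥb s))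
    · exact abssub_le' (hQ₀ᵥb s) (le_refl |Ψ₀|)
  have iDbar : Integrable Dbar P := by
    rw [hDbar]
    refine IB (C := 1 * 1 / (δ * δ) * (1 + 1) + 1 / δ * (1 + 1) + (1 + |ψstar|)) ((((hIm.mul hΔm).div (hgm.mul hGm)).mul (hym.sub hQm)).add
      ((hIm.div hgm).mul (hQm.sub hQvm)) |>.add (hQvm.sub measurable_const)) ?_
    filter_upwards [hΔb, hyb] with s h1 h2
    refine le_trans (abs_add_le _ _) (add_le_add (le_trans (abs_add_le _ _) (add_le_add ?_ ?_)) ?_)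
    · exact absmul_le' (absdiv_le' (absmul_le' (hIb s) h1) hδδ (hδδle s))
        (abssub_le' h2 (hQbb s))
    · exact absmul_le' (absdiv_le' (hIb s) hδ0 (hgδ s)) (abssub_le' (hQbb s) (hQvb s))
    · exact abssub_le' (hQvb s) (le_refl |ψstar|)
  -- the four conditioning identities
  have K1 : ∫ s, ((if v ≤ s.2.1 then (1 : ℝ) else 0) / (gbar s * Gbar s)) *
        (s.2.2.2 * s.2.2.1) ∂P
      = ∫ s, ((if v ≤ s.2.1 then (1 : ℝ) else 0) / (gbar s * Gbar s)) *
        (Q₀ s * G₀ s) ∂P := by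
    have h := integral_mul_condexp' P hmle1
      (f := fun s => (if v ≤ s.2.1 then (1 : ℝ) else 0) / (gbar s * Gbar s))
      (g := fun s => s.2.2.2 * s.2.2.1)
      (hIm1.div (hgbar1.mul hGbarMeas)) (hym.mul hΔm)
      (ae_of_all _ fun s => absdiv_le' (hIb s) hδδ (hδδle s)) hyΔb
    refine h.trans (integral_congr_ae ?_)
    filter_upwards [hEyΔ] with s hs
    rw [hs]
  have K2 : ∫ s, ((if v ≤ s.2.1 then (1 : ℝ) else 0) * Qbar s / (gbar s * Gbar s)) *
        s.2.2.1 ∂P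
      = ∫ s, ((if v ≤ s.2.1 then (1 : ℝ) else 0) * Qbar s / (gbar s * Gbar s)) *
        G₀ s ∂P := by
    have h := integral_mul_condexp' P hmle1
      (f := fun s => (if v ≤ s.2.1 then (1 : ℝ) else 0) * Qbar s / (gbar s * Gbar s))
      (g := fun s => s.2.2.1)
      ((hIm1.mul hQbarMeas).div (hgbar1.mul hGbarMeas)) hΔm
      (ae_of_all _ fun s => absdiv_le' (absmul_le' (hIb s) (hQbb s)) hδδ (hδδle s)) hΔb
    refine h.trans (integral_congr_ae ?_)
    filter_upwards [hG₀.symm] with s hs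
    rw [hs]
  have K3 : ∫ s, (1 / gbar s) * (Q₀ s * (if v ≤ s.2.1 then (1 : ℝ) else 0)) ∂P
      = ∫ s, (1 / gbar s) * (Q₀ᵥ s * g₀ s) ∂P := by
    have h := integral_mul_condexp' P hmle0
      (f := fun s => 1 / gbar s)
      (g := fun s => Q₀ s * (if v ≤ s.2.1 then (1 : ℝ) else 0))
      (measurable_const.div hgbarMeas) (hQ₀m.mul hIm)
      (ae_of_all _ fun s => absdiv_le' h1b hδ0 (hgδ s))
      (ae_of_all _ fun s => absmul_le' (hQ₀b s) (hIb s))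
    refine h.trans (integral_congr_ae ?_)
    filter_upwards [hEQI] with s hs
    rw [hs]
  have K4 : ∫ s, (Qbarv s / gbar s) * (if v ≤ s.2.1 then (1 : ℝ) else 0) ∂P
      = ∫ s, (Qbarv s / gbar s) * g₀ s ∂P := by
    have h := integral_mul_condexp' P hmle0
      (f := fun s => Qbarv s / gbar s)
      (g := fun s => if v ≤ s.2.1 then (1 : ℝ) else 0)
      (hQbarvMeas.div hgbarMeas) hIm
      (ae_of_all _ fun s => absdiv_le' (hQvb s) hδ0 (hgδ s))
      (ae_of_all _ fun s => hIb s)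
    refine h.trans (integral_congr_ae ?_)
    filter_upwards [hg₀.symm] with s hs
    rw [hs]
  -- empirical mean of Dbar vanishes
  have hPn : (1 / n : ℝ) * ∑ i, Dbar (o i) = 0 := by
    have hre : ∑ i, Dbar (o i) =
        (∑ i, ((if v ≤ (o i).2.1 then (1 : ℝ) else 0) * (o i).2.2.1 /
          (gbar (o i) * Gbar (o i))) * ((o i).2.2.2 - Qbar (o i)))
        + (∑ i, ((if v ≤ (o i).2.1 then (1 : ℝ) else 0) / gbar (o i)) *
          (Qbar (o i) - Qbarv (o i)))
        + ∑ i, (Qbarv (o i) - ψstar) := by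
      simp only [hDbar]
      rw [← Finset.sum_add_distrib, ← Finset.sum_add_distrib]
    rw [hre, mul_add, mul_add, hscore1, hscore2, Finset.sum_sub_distrib,
      Finset.sum_const, Finset.card_univ, Fintype.card_fin, nsmul_eq_mul, mul_sub,
      ← hψstar, one_div, inv_mul_cancel_left₀ hn']
    ring
  -- the integral of Dbar
  have hsplit1 : ∫ s, Dbar s ∂P
      = (∫ s, ((if v ≤ s.2.1 then (1 : ℝ) else 0) / (gbar s * Gbar s)) * (s.2.2.2 * s.2.2.1) ∂P) - (∫ s, ((if v ≤ s.2.1 then (1 : ℝ) else 0) * Qbar s / (gbar s * Gbar s)) * s.2.2.1 ∂P) + (∫ s, ((if v ≤ s.2.1 then (1 : ℝ) else 0) / gbar s) * (Qbar s - Qbarv s) ∂P)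
        + ((∫ s, Qbarv s ∂P) - ψstar) := by
    have i1 : Integrable (fun s => ((if v ≤ s.2.1 then (1 : ℝ) else 0) / (gbar s * Gbar s)) * (s.2.2.2 * s.2.2.1) - ((if v ≤ s.2.1 then (1 : ℝ) else 0) * Qbar s / (gbar s * Gbar s)) * s.2.2.1) P := iA.sub iB
    have i2 : Integrable (fun s => ((if v ≤ s.2.1 then (1 : ℝ) else 0) / (gbar s * Gbar s)) * (s.2.2.2 * s.2.2.1) - ((if v ≤ s.2.1 then (1 : ℝ) else 0) * Qbar s / (gbar s * Gbar s)) * s.2.2.1 + ((if v ≤ s.2.1 then (1 : ℝ) else 0) / gbar s) * (Qbar s - Qbarv s)) P := i1.add iT2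
    have i3 : Integrable (fun s => Qbarv s - ψstar) P := iQv.sub (integrable_const _)
    have e1 : ∫ s, Dbar s ∂P
        = ∫ s, (((if v ≤ s.2.1 then (1 : ℝ) else 0) / (gbar s * Gbar s)) * (s.2.2.2 * s.2.2.1) - ((if v ≤ s.2.1 then (1 : ℝ) else 0) * Qbar s / (gbar s * Gbar s)) * s.2.2.1 + ((if v ≤ s.2.1 then (1 : ℝ) else 0) / gbar s) * (Qbar s - Qbarv s) + (Qbarv s - ψstar)) ∂P := by
      refine integral_congr_ae (ae_of_all _ fun s => ?_)
      rw [hDbar]; ring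
    rw [e1, integral_add i2 i3, integral_add i1 iT2, integral_sub iA iB,
      integral_sub iQv (integrable_const _), integral_const]
    simp [measure_univ]
  have hsplit2 : (∫ s, ((if v ≤ s.2.1 then (1 : ℝ) else 0) / (gbar s * Gbar s)) * (Q₀ s * G₀ s) ∂P) - (∫ s, ((if v ≤ s.2.1 then (1 : ℝ) else 0) * Qbar s / (gbar s * Gbar s)) * G₀ s ∂P) + (∫ s, ((if v ≤ s.2.1 then (1 : ℝ) else 0) / gbar s) * (Qbar s - Qbarv s) ∂P)
      = (∫ s, ((if v ≤ s.2.1 then (1 : ℝ) else 0) / gbar s) * ((G₀ s - Gbar s) / Gbar s) * (Q₀ s - Qbar s) ∂P) + ((∫ s, (1 / gbar s) * (Q₀ s * (if v ≤ s.2.1 then (1 : ℝ) else 0)) ∂P) - ∫ s, (Qbarv s / gbar s) * (if v ≤ s.2.1 then (1 : ℝ) else 0) ∂P) := by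
    have i1 : Integrable (fun s => ((if v ≤ s.2.1 then (1 : ℝ) else 0) / (gbar s * Gbar s)) * (Q₀ s * G₀ s) - ((if v ≤ s.2.1 then (1 : ℝ) else 0) * Qbar s / (gbar s * Gbar s)) * G₀ s) P := iA'.sub iB'
    have i7 : Integrable (fun s => (1 / gbar s) * (Q₀ s * (if v ≤ s.2.1 then (1 : ℝ) else 0)) - (Qbarv s / gbar s) * (if v ≤ s.2.1 then (1 : ℝ) else 0)) P := iC.sub iDv
    rw [← integral_sub iA' iB', ← integral_add i1 iT2, ← integral_sub iC iDv,
      ← integral_add iRa i7]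
    refine integral_congr_ae (ae_of_all _ fun s => ?_)
    have hg := hgne s
    have hG := hGne s
    by_cases h : v ≤ s.2.1 <;> simp only [h, if_true, if_false] <;> field_simp <;> ring
  have hsplit3 : (∫ s, (1 / gbar s) * (Q₀ᵥ s * g₀ s) ∂P) - ∫ s, (Qbarv s / gbar s) * g₀ s ∂P
      = (∫ s, ((g₀ s - gbar s) / gbar s) * (Q₀ᵥ s - Qbarv s) ∂P) + ((∫ s, Q₀ᵥ s ∂P) - ∫ s, Qbarv s ∂P) := by
    have i5 : Integrable (fun s => Q₀ᵥ s - Qbarv s) P := iQ₀v.sub iQv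
    rw [← integral_sub iC' iDv', ← integral_sub iQ₀v iQv, ← integral_add iRb i5]
    refine integral_congr_ae (ae_of_all _ fun s => ?_)
    have hg := hgne s
    have hG := hGne s
    by_cases h : v ≤ s.2.1 <;> simp only [h, if_true, if_false] <;> field_simp <;> ring
  have hintDbar : ∫ s, Dbar s ∂P = R₂ + Ψ₀ - ψstar := by
    rw [hsplit1, K1, K2, hsplit2, K3, K4, hsplit3, hR₂, hΨ₀]
    ring
  -- final assembly
  have hsum : ∑ i, (Dbar (o i) - D₀ (o i)) = ∑ i, Dbar (o i) - ∑ i, D₀ (o i) :=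
    Finset.sum_sub_distrib _ _
  have hint : ∫ s, (Dbar s - D₀ s) ∂P = (∫ s, Dbar s ∂P) - ∫ s, D₀ s ∂P :=
    integral_sub iDbar iD₀
  rw [hsum, hint, hD₀mean, hintDbar, mul_sub]
  linarith [hPn]
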